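/- Let CC' be a two-column HHL filling obtained from the root configuration ĈC' by applying a sequence of transpositions from the set A(β) (each transposition switching a pivot entry with another entry of the left column, applied legally). If there exists a legal transposition between two pivot entries of CC' (i.e. a transposition of two pivot entries of the left column whose application again yields an HHL filling), then the Non-overlapping Condition fails for ĈC': there exist two distinct pivot rows j ≠ k with [b_j, d_j] ∩ [b_k, d_k] ≠ ∅, where b_j is the left-column pivot entry in pivot row q_j and d_j is the right-column entry in that row (d_j = ∞ if absent). -/
import Mathlib


/-- Two-column HHL filling condition. -/
def HHL2 (c c' : ℕ) (C : Fin c → ℕ) (C' : Fin c' → ℕ) : Prop :=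
  Function.Injective C ∧ Function.Injective C' ∧
  (∀ (i : Fin c) (k : Fin c'), (k : ℕ) < (i : ℕ) → C i ≠ C' k) ∧
  (∀ (i : Fin c) (h : (i : ℕ) < c'), C i ≤ C' ⟨i, h⟩)

/-- Row `i` is a pivot row of the two-column configuration `CC'`:
either the left entry is strictly smaller than the right entry, or the row
lies below the bottom of the right column. -/
def PivotRow (c c' : ℕ) (C : Fin c → ℕ) (C' : Fin c' → ℕ) (i : Fin c) : Prop :=
  c' ≤ (i : ℕ) ∨ ∃ h : (i : ℕ) < c', C i < C' ⟨i, h⟩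

/-- The set of pivot entries of the left column. -/
def pivotEntries (c c' : ℕ) (C : Fin c → ℕ) (C' : Fin c' → ℕ) : Set ℕ :=
  {x | ∃ i : Fin c, PivotRow c c' C C' i ∧ C i = x}

/-- Failure of the Non-overlapping Condition: two distinct pivot rows whose
pivot intervals `[b_j, d_j]` (with `d_j = ∞` when the right entry is absent)
intersect. -/
def Overlap (c c' : ℕ) (C : Fin c → ℕ) (C' : Fin c' → ℕ) : Prop :=
  ∃ i j : Fin c, i ≠ j ∧ PivotRow c c' C C' i ∧ PivotRow c c' C C' j ∧
    ∃ z : ℕ, C i ≤ z ∧ (∀ h : (i : ℕ) < c', z ≤ C' ⟨i, h⟩) ∧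
      C j ≤ z ∧ (∀ h : (j : ℕ) < c', z ≤ C' ⟨j, h⟩)

lemma aux_overlap (c c' : ℕ) (hcc : c = c' ∨ c = c' + 1)
    (C' : Fin c' → ℕ) (Croot : Fin c → ℕ)
    (hroot : HHL2 c c' Croot C')
    (hmatch : ∀ (i : Fin c) (j : Fin c'), Croot i = C' j → (i : ℕ) = (j : ℕ))
    (hbottom : ∀ i : Fin c, (i : ℕ) = c' →
      ∀ i' : Fin c, (∀ j : Fin c', Croot i' ≠ C' j) → Croot i' ≤ Croot i)
    (C : Fin c → ℕ) (hCarr : Set.range C = Set.range Croot)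
    (hC : HHL2 c c' C C')
    (rlo rhi : Fin c) (hlt : C rlo < C rhi)
    (hleg : ∀ h : (rlo : ℕ) < c', C rhi ≤ C' ⟨rlo, h⟩)
    (hp1 : C rlo ∈ pivotEntries c c' Croot C')
    (hp2 : C rhi ∈ pivotEntries c c' Croot C') :
    Overlap c c' Croot C' := by
  classical
  by_contra hno
  obtain ⟨p₁, hp₁piv, hp₁val⟩ := hp1
  obtain ⟨p₂, hp₂piv, hp₂val⟩ := hp2
  set b₁ := C rlo with hb₁
  set b₂ := C rhi with hb₂
  -- pivot entries of the root match no entry of C'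
  have hdistinct : ∀ q : Fin c, PivotRow c c' Croot C' q → ∀ j : Fin c', Croot q ≠ C' j := by
    intro q hq j he
    have hqj : (q : ℕ) = (j : ℕ) := hmatch q j he
    have hj : (q : ℕ) < c' := hqj ▸ j.isLt
    rcases hq with h | ⟨h, hlt'⟩
    · omega
    · have hfj : (⟨(q : ℕ), h⟩ : Fin c') = j := Fin.ext hqj
      rw [hfj, ← he] at hlt'
      exact lt_irrefl _ hlt'
  have hb2C'p₂ : ∀ h : (p₂ : ℕ) < c', b₂ ≤ C' ⟨p₂, h⟩ := by
    intro h
    rcases hp₂piv with h' | ⟨h'', hlt'⟩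
    · omega
    · rw [← hp₂val]; exact le_of_lt hlt'
  set S' : Finset (Fin c) := Finset.univ.filter (fun i => b₂ ≤ Croot i) with hS'
  set R : Finset (Fin c) :=
    Finset.univ.filter (fun r => ∀ h : (r : ℕ) < c', b₂ ≤ C' ⟨r, h⟩) with hR
  have hRS' : R ⊆ S' := by
    intro r hr
    simp only [hR, Finset.mem_filter, Finset.mem_univ, true_and] at hr
    simp only [hS', Finset.mem_filter, Finset.mem_univ, true_and]
    rcases Nat.lt_or_ge (r : ℕ) c' with h | h
    · by_cases hpiv : PivotRow c c' Croot C' r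
      · by_contra hcon
        push_neg at hcon
        have rne : r ≠ p₂ := by
          intro e; rw [e, hp₂val] at hcon; exact lt_irrefl _ hcon
        exact hno ⟨r, p₂, rne, hpiv, hp₂piv, b₂, le_of_lt hcon,
          fun h' => hr h', le_of_eq hp₂val, hb2C'p₂⟩
      · have h1 : Croot r ≤ C' ⟨(r : ℕ), h⟩ := hroot.2.2.2 r h
        have h2 : ¬ Croot r < C' ⟨(r : ℕ), h⟩ := fun hl => hpiv (Or.inr ⟨h, hl⟩)
        have h3 : Croot r = C' ⟨(r : ℕ), h⟩ := le_antisymm h1 (not_lt.mp h2)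
        rw [h3]; exact hr h
    · have hr' : (r : ℕ) = c' := by have := r.isLt; omega
      rw [← hp₂val]
      exact hbottom r hr' p₂ (hdistinct p₂ hp₂piv)
  have hp₁S' : p₁ ∉ S' := by
    simp only [hS', Finset.mem_filter, Finset.mem_univ, true_and, not_le]
    rw [hp₁val]; exact hlt
  haveI : Nonempty (Fin c) := ⟨rlo⟩
  set f : Fin c → Fin c := fun i => Function.invFun C (Croot i) with hf
  have hfC : ∀ i : Fin c, C (f i) = Croot i := by
    intro i
    have hm : Croot i ∈ Set.range C := by rw [hCarr]; exact ⟨i, rfl⟩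
    exact Function.invFun_eq hm
  have hfR : ∀ i ∈ insert p₁ S', f i ∈ R := by
    intro i hi
    simp only [hR, Finset.mem_filter, Finset.mem_univ, true_and]
    intro h
    rcases Finset.mem_insert.mp hi with he | hi'
    · have : C (f i) = C rlo := by rw [hfC, he, hp₁val]
      have hfi : f i = rlo := hC.1 this
      rw [show (⟨((f i) : ℕ), h⟩ : Fin c') = ⟨(rlo : ℕ), hfi ▸ h⟩ from Fin.ext (by simp [hfi])]
      exact hleg _
    · simp only [hS', Finset.mem_filter, Finset.mem_univ, true_and] at hi'
      calc b₂ ≤ Croot i := hi'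
        _ = C (f i) := (hfC i).symm
        _ ≤ C' ⟨(f i : ℕ), h⟩ := hC.2.2.2 (f i) h
  have hinj : Set.InjOn f (insert p₁ S' : Finset (Fin c)) := by
    intro i _ j _ e
    have : Croot i = Croot j := by rw [← hfC i, ← hfC j, e]
    exact hroot.1 this
  have hcard : (insert p₁ S').card ≤ R.card :=
    Finset.card_le_card_of_injOn f hfR hinj
  rw [Finset.card_insert_of_notMem hp₁S'] at hcard
  have := Finset.card_le_card hRS'
  omega

/-- Lemma 4.1: if a two-column HHL filling `CC'`, obtained by rearranging the
root column `Croot` (an arrangement of the same entries), admits a legal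
transposition between two pivot entries, then the Non-overlapping Condition
fails for the root configuration `Croot C'`. -/

theorem legal_pivot_swap_implies_overlap (c c' : ℕ) (hcc : c = c' ∨ c = c' + 1)
    (C' : Fin c' → ℕ) (Croot : Fin c → ℕ)
    (hroot : HHL2 c c' Croot C')
    -- root characterization: common entries matched, distinct entries in order,
    -- bottom entry largest distinct:
    (hmatch : ∀ (i : Fin c) (j : Fin c'), Croot i = C' j → (i : ℕ) = (j : ℕ))
    (horder : ∀ (i i' : Fin c) (hi : (i : ℕ) < c') (hi' : (i' : ℕ) < c'),
      (∀ j : Fin c', Croot i ≠ C' j) → (∀ j : Fin c', Croot i' ≠ C' j) →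
      (Croot i < Croot i' ↔ C' ⟨(i : ℕ), hi⟩ < C' ⟨(i' : ℕ), hi'⟩))
    (hbottom : ∀ i : Fin c, (i : ℕ) = c' →
      ∀ i' : Fin c, (∀ j : Fin c', Croot i' ≠ C' j) → Croot i' ≤ Croot i)
    (C : Fin c → ℕ) (hCarr : Set.range C = Set.range Croot)
    (hC : HHL2 c c' C C')
    -- a legal transposition between two pivot entries exists:
    (hswap : ∃ i₁ i₂ : Fin c, i₁ ≠ i₂ ∧
      C i₁ ∈ pivotEntries c c' Croot C' ∧ C i₂ ∈ pivotEntries c c' Croot C' ∧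
      HHL2 c c' (C ∘ Equiv.swap i₁ i₂) C') :
    Overlap c c' Croot C' := by
  obtain ⟨a, b, hne, hpa, hpb, hsw⟩ := hswap
  have hab : C a ≠ C b := fun e => hne (hC.1 e)
  rcases hab.lt_or_gt with h | h
  · apply aux_overlap c c' hcc C' Croot hroot hmatch hbottom C hCarr hC a b h _ hpa hpb
    intro hh
    have := hsw.2.2.2 a hh
    simpa [Equiv.swap_apply_left] using this
  · apply aux_overlap c c' hcc C' Croot hroot hmatch hbottom C hCarr hC b a h _ hpb hpa
    intro hh
    have := hsw.2.2.2 b hh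
    simpa [Equiv.swap_apply_right] using this
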